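/- arXiv:2105.03067 — 2 statements merged into one kernel-verified Lean document; each statement's English description precedes it below -/
import Mathlib

section
/- Let Z ~ N(μ, σ²) with σ > 0 and law P0. Then the s-value of the mean equals e^{−μ²/(2σ²)}; that is, sup{ exp(−D_KL(P‖P0)) : P a probability measure with E_P[Z] = 0 } = e^{−μ²/(2σ²)}. -/
open MeasureTheory ProbabilityTheory Real
open scoped ENNReal NNReal Classical

/-- Kullback–Leibler divergence `D_KL(P‖P₀)`, valued in `ℝ≥0∞`: it is the integral
`∫ log (dP/dP₀) dP` when `P ≪ P₀` (and the integrand is integrable), and `+∞` otherwise. -/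
noncomputable def KLdiv {α : Type*} [MeasurableSpace α] (P P₀ : Measure α) : ℝ≥0∞ :=
  if P ≪ P₀ ∧ Integrable (llr P P₀) P then ENNReal.ofReal (∫ x, llr P P₀ x ∂P) else ⊤

/-- `exp(−D_KL(P‖P₀))`, with the convention `exp(−∞) = 0`. -/
noncomputable def expNegKL {α : Type*} [MeasurableSpace α] (P P₀ : Measure α) : ℝ :=
  if KLdiv P P₀ = ⊤ then 0 else Real.exp (-(KLdiv P P₀).toReal)

/-! ### Auxiliary lemmas -/

/-- Nonnegativity of the Kullback–Leibler divergence (Gibbs' inequality), proved via Jensen's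
inequality for the convex function `x ↦ x * log x`. -/
lemma aux_integral_llr_nonneg {α : Type*} [MeasurableSpace α] (μ ν : Measure α)
    [IsProbabilityMeasure μ] [IsProbabilityMeasure ν]
    (hμν : μ ≪ ν) (h : Integrable (llr μ ν) μ) : 0 ≤ ∫ x, llr μ ν x ∂μ := by
  have hg : Integrable (fun x => (μ.rnDeriv ν x).toReal) ν :=
    Measure.integrable_toReal_rnDeriv
  have h1 : ∫ x, (μ.rnDeriv ν x).toReal ∂ν = 1 := by
    rw [Measure.integral_toReal_rnDeriv hμν]; simp
  have hcomp : Integrable ((fun y : ℝ => y * Real.log y) ∘ fun x => (μ.rnDeriv ν x).toReal) ν := by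
    have h2 := (integrable_rnDeriv_smul_iff hμν (f := llr μ ν)).mpr h
    simpa only [Function.comp_def, smul_eq_mul, llr_def] using h2
  have hj := Real.convexOn_mul_log.map_integral_le Real.continuous_mul_log.continuousOn
      isClosed_Ici (Filter.Eventually.of_forall fun x => Set.mem_Ici.mpr ENNReal.toReal_nonneg)
      hg hcomp
  rw [h1, Real.log_one, mul_zero] at hj
  refine hj.trans_eq ?_
  rw [← integral_rnDeriv_smul hμν (f := llr μ ν)]
  simp only [Function.comp_def, smul_eq_mul, llr_def]

lemma aux_vne (σ : ℝ) (hσ : 0 < σ) : (⟨σ ^ 2, sq_nonneg σ⟩ : ℝ≥0) ≠ 0 := by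
  intro h
  have h2 : σ ^ 2 = 0 := congrArg NNReal.toReal h
  exact pow_ne_zero 2 hσ.ne' h2

instance aux_gaussianReal_isProb (μ σ : ℝ) :
    IsProbabilityMeasure (gaussianReal μ ⟨σ ^ 2, sq_nonneg σ⟩) :=
  instIsProbabilityMeasureGaussianReal _ _

lemma aux_log_ratio (m σ : ℝ) (hσ : 0 < σ) (x : ℝ) :
    Real.log (gaussianPDFReal 0 ⟨σ ^ 2, sq_nonneg σ⟩ x)
      - Real.log (gaussianPDFReal m ⟨σ ^ 2, sq_nonneg σ⟩ x)
      = (m ^ 2 - 2 * m * x) / (2 * σ ^ 2) := by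
  have hσ2 : (0:ℝ) < σ ^ 2 := by positivity
  have hA : (0:ℝ) < (Real.sqrt (2 * π * σ ^ 2))⁻¹ := by
    have : (0:ℝ) < 2 * π * σ ^ 2 := by positivity
    positivity
  simp only [gaussianPDFReal, NNReal.coe_mk]
  erw [NNReal.coe_mk]
  rw [Real.log_mul hA.ne' (Real.exp_pos _).ne', Real.log_mul hA.ne' (Real.exp_pos _).ne',
    Real.log_exp, Real.log_exp]
  field_simp
  ring

/-- Chain rule for the log-likelihood ratio with respect to the two gaussians. -/
lemma aux_llr_shift (m σ : ℝ) (hσ : 0 < σ) (P : Measure ℝ) [SigmaFinite P]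
    (hP : P ≪ gaussianReal m ⟨σ ^ 2, sq_nonneg σ⟩) :
    llr P (gaussianReal m ⟨σ ^ 2, sq_nonneg σ⟩) =ᵐ[P]
      fun x => llr P (gaussianReal 0 ⟨σ ^ 2, sq_nonneg σ⟩) x
        + (m ^ 2 - 2 * m * x) / (2 * σ ^ 2) := by
  set v : ℝ≥0 := ⟨σ ^ 2, sq_nonneg σ⟩ with hv_def
  have hv : v ≠ 0 := aux_vne σ hσ
  set Q := gaussianReal m v with hQ_def
  set Q₀ := gaussianReal 0 v with hQ₀_def
  have hQv : Q ≪ volume := gaussianReal_absolutelyContinuous _ hv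
  have hvQ₀ : volume ≪ Q₀ := gaussianReal_absolutelyContinuous' _ hv
  have hPQ₀ : P ≪ Q₀ := hP.trans (hQv.trans hvQ₀)
  have h₁ : Q₀.rnDeriv Q =ᵐ[Q] fun x => gaussianPDF 0 v x * (gaussianPDF m v x)⁻¹ := by
    have hmul := Measure.rnDeriv_mul_rnDeriv (μ := Q₀) (ν := volume) (κ := Q)
      (gaussianReal_absolutelyContinuous _ hv)
    have hd0 : Q₀.rnDeriv volume =ᵐ[Q] gaussianPDF 0 v := hQv.ae_le (rnDeriv_gaussianReal 0 v)
    have hinv : volume.rnDeriv Q =ᵐ[Q] fun x => (gaussianPDF m v x)⁻¹ := by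
      have h3 := Measure.inv_rnDeriv hQv
      have hdm : Q.rnDeriv volume =ᵐ[Q] gaussianPDF m v := hQv.ae_le (rnDeriv_gaussianReal m v)
      filter_upwards [h3, hdm] with x hx hx'
      rw [← hx, Pi.inv_apply, hx']
    filter_upwards [hmul, hd0, hinv] with x hx hx0 hxi
    rw [← hx, Pi.mul_apply, hx0, hxi]
  have h₂ := hP.ae_le (Measure.rnDeriv_mul_rnDeriv (μ := P) (ν := Q₀) (κ := Q) hPQ₀)
  filter_upwards [h₂, hP.ae_le h₁, Measure.rnDeriv_pos hPQ₀,
    hPQ₀.ae_le (Measure.rnDeriv_lt_top P Q₀)] with x hx hxr hpos hlt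
  have hp0 : 0 < gaussianPDFReal 0 v x := gaussianPDFReal_pos _ _ _ hv
  have hpm : 0 < gaussianPDFReal m v x := gaussianPDFReal_pos _ _ _ hv
  have hd_pos : (0:ℝ) < ((P.rnDeriv Q₀ x)).toReal := ENNReal.toReal_pos hpos.ne' hlt.ne
  have hratio : ((gaussianPDF 0 v x * (gaussianPDF m v x)⁻¹)).toReal
      = gaussianPDFReal 0 v x / gaussianPDFReal m v x := by
    rw [ENNReal.toReal_mul, ENNReal.toReal_inv]
    simp only [gaussianPDF, ENNReal.toReal_ofReal hp0.le, ENNReal.toReal_ofReal hpm.le]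
    rw [div_eq_mul_inv]
  have hkey : llr P Q x = llr P Q₀ x + (m ^ 2 - 2 * m * x) / (2 * σ ^ 2) := by
    unfold llr
    rw [← hx, Pi.mul_apply, hxr, ENNReal.toReal_mul, hratio,
      Real.log_mul hd_pos.ne' (by positivity), Real.log_div hp0.ne' hpm.ne',
      aux_log_ratio m σ hσ x]
  exact hkey

lemma aux_pdf_mul_id (σ : ℝ) (hσ : 0 < σ) :
    (fun x : ℝ => gaussianPDFReal 0 ⟨σ ^ 2, sq_nonneg σ⟩ x * x)
      = fun x : ℝ => (Real.sqrt (2 * π * σ ^ 2))⁻¹ *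
          (x * Real.exp (-(2 * σ ^ 2)⁻¹ * x ^ 2)) := by
  funext x
  simp only [gaussianPDFReal, NNReal.coe_mk]
  erw [NNReal.coe_mk]
  rw [show -(x - 0) ^ 2 / (2 * σ ^ 2) = -(2 * σ ^ 2)⁻¹ * x ^ 2 by
    field_simp; ring]
  ring

lemma aux_integrable_pdf_mul_id (σ : ℝ) (hσ : 0 < σ) :
    Integrable (fun x : ℝ => gaussianPDFReal 0 ⟨σ ^ 2, sq_nonneg σ⟩ x * x) := by
  rw [aux_pdf_mul_id σ hσ]
  have hb : (0:ℝ) < (2 * σ ^ 2)⁻¹ := by positivity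
  exact (integrable_mul_exp_neg_mul_sq hb).const_mul _

lemma aux_rnDeriv_smul_id (σ : ℝ) :
    (fun x : ℝ => ((gaussianReal 0 ⟨σ ^ 2, sq_nonneg σ⟩).rnDeriv volume x).toReal • x)
      =ᵐ[(volume : Measure ℝ)]
      fun x : ℝ => gaussianPDFReal 0 ⟨σ ^ 2, sq_nonneg σ⟩ x * x := by
  filter_upwards [rnDeriv_gaussianReal 0 ⟨σ ^ 2, sq_nonneg σ⟩] with x hx
  rw [hx]
  simp [gaussianPDF, ENNReal.toReal_ofReal (gaussianPDFReal_nonneg _ _ x), smul_eq_mul]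
  exact Or.inl (gaussianPDFReal_nonneg _ _ x)

/-- The identity is integrable with respect to the centered gaussian. -/
lemma aux_integrable_id (σ : ℝ) (hσ : 0 < σ) :
    Integrable (fun z : ℝ => z) (gaussianReal 0 ⟨σ ^ 2, sq_nonneg σ⟩) := by
  have hv := aux_vne σ hσ
  have hac : gaussianReal 0 ⟨σ ^ 2, sq_nonneg σ⟩ ≪ volume :=
    gaussianReal_absolutelyContinuous _ hv
  rw [← integrable_rnDeriv_smul_iff hac]
  exact (aux_integrable_pdf_mul_id σ hσ).congr (aux_rnDeriv_smul_id σ).symm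

/-- The centered gaussian has mean zero. -/
lemma aux_mean_zero (σ : ℝ) (hσ : 0 < σ) :
    ∫ z, z ∂(gaussianReal 0 ⟨σ ^ 2, sq_nonneg σ⟩) = 0 := by
  have hv := aux_vne σ hσ
  have hac : gaussianReal 0 ⟨σ ^ 2, sq_nonneg σ⟩ ≪ volume :=
    gaussianReal_absolutelyContinuous _ hv
  rw [← integral_rnDeriv_smul hac (f := fun z : ℝ => z),
    integral_congr_ae (aux_rnDeriv_smul_id σ)]
  have hodd : (fun x : ℝ => gaussianPDFReal 0 ⟨σ ^ 2, sq_nonneg σ⟩ (-x) * (-x))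
      = fun x : ℝ => -(gaussianPDFReal 0 ⟨σ ^ 2, sq_nonneg σ⟩ x * x) := by
    funext x
    have : gaussianPDFReal 0 ⟨σ ^ 2, sq_nonneg σ⟩ (-x)
        = gaussianPDFReal 0 ⟨σ ^ 2, sq_nonneg σ⟩ x := by
      simp only [gaussianPDFReal, NNReal.coe_mk]
      ring_nf
    rw [this]; ring
  have h := integral_neg_eq_self
    (fun x : ℝ => gaussianPDFReal 0 ⟨σ ^ 2, sq_nonneg σ⟩ x * x) (volume : Measure ℝ)
  rw [hodd] at h
  rw [integral_neg] at h
  linarith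

lemma aux_integrable_c (m σ : ℝ) (P : Measure ℝ) [IsProbabilityMeasure P]
    (hz : Integrable (fun z : ℝ => z) P) :
    Integrable (fun x : ℝ => (m ^ 2 - 2 * m * x) / (2 * σ ^ 2)) P :=
  ((integrable_const (m ^ 2)).sub (hz.const_mul (2 * m))).div_const _

lemma aux_integral_c (m σ : ℝ) (P : Measure ℝ) [IsProbabilityMeasure P]
    (hz : Integrable (fun z : ℝ => z) P) (hmean : ∫ z, z ∂P = 0) :
    ∫ x, (m ^ 2 - 2 * m * x) / (2 * σ ^ 2) ∂P = m ^ 2 / (2 * σ ^ 2) := by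
  rw [integral_div, integral_sub (integrable_const _) (hz.const_mul (2 * m)),
    integral_const, integral_const_mul, hmean]
  simp

/-- Key lower bound on the KL divergence for measures with zero mean. -/
lemma aux_lower_bound (m σ : ℝ) (hσ : 0 < σ) (P : Measure ℝ) [IsProbabilityMeasure P]
    (hP : P ≪ gaussianReal m ⟨σ ^ 2, sq_nonneg σ⟩)
    (h_int : Integrable (llr P (gaussianReal m ⟨σ ^ 2, sq_nonneg σ⟩)) P)
    (hz : Integrable (fun z : ℝ => z) P) (hmean : ∫ z, z ∂P = 0) :
    m ^ 2 / (2 * σ ^ 2) ≤ ∫ x, llr P (gaussianReal m ⟨σ ^ 2, sq_nonneg σ⟩) x ∂P := by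
  have hv := aux_vne σ hσ
  have hshift := aux_llr_shift m σ hσ P hP
  have hc := aux_integrable_c m σ P hz
  have hPQ₀ : P ≪ gaussianReal 0 ⟨σ ^ 2, sq_nonneg σ⟩ :=
    hP.trans ((gaussianReal_absolutelyContinuous _ hv).trans
      (gaussianReal_absolutelyContinuous' _ hv))
  have h_int₀ : Integrable (llr P (gaussianReal 0 ⟨σ ^ 2, sq_nonneg σ⟩)) P := by
    refine (h_int.sub hc).congr ?_
    filter_upwards [hshift] with x hx
    simp only [Pi.sub_apply]
    rw [hx]; ring
  have h0 := aux_integral_llr_nonneg P (gaussianReal 0 ⟨σ ^ 2, sq_nonneg σ⟩) hPQ₀ h_int₀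
  calc m ^ 2 / (2 * σ ^ 2)
      ≤ (∫ x, llr P (gaussianReal 0 ⟨σ ^ 2, sq_nonneg σ⟩) x ∂P) + m ^ 2 / (2 * σ ^ 2) := by
        linarith
    _ = ∫ x, llr P (gaussianReal m ⟨σ ^ 2, sq_nonneg σ⟩) x ∂P := by
        rw [integral_congr_ae hshift, integral_add h_int₀ hc,
          aux_integral_c m σ P hz hmean]

/-- The log-likelihood ratio of the centered gaussian with respect to `N(m, σ²)`. -/
lemma aux_llr_Q₀ (m σ : ℝ) (hσ : 0 < σ) :
    llr (gaussianReal 0 ⟨σ ^ 2, sq_nonneg σ⟩) (gaussianReal m ⟨σ ^ 2, sq_nonneg σ⟩)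
      =ᵐ[gaussianReal 0 ⟨σ ^ 2, sq_nonneg σ⟩]
      fun x => (m ^ 2 - 2 * m * x) / (2 * σ ^ 2) := by
  have hv := aux_vne σ hσ
  have hQ₀Q : gaussianReal 0 ⟨σ ^ 2, sq_nonneg σ⟩ ≪ gaussianReal m ⟨σ ^ 2, sq_nonneg σ⟩ :=
    (gaussianReal_absolutelyContinuous _ hv).trans (gaussianReal_absolutelyContinuous' _ hv)
  have hshift := aux_llr_shift m σ hσ (gaussianReal 0 ⟨σ ^ 2, sq_nonneg σ⟩) hQ₀Q
  have hself : llr (gaussianReal 0 ⟨σ ^ 2, sq_nonneg σ⟩) (gaussianReal 0 ⟨σ ^ 2, sq_nonneg σ⟩)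
      =ᵐ[gaussianReal 0 ⟨σ ^ 2, sq_nonneg σ⟩] 0 := by
    filter_upwards [Measure.rnDeriv_self (gaussianReal 0 ⟨σ ^ 2, sq_nonneg σ⟩)] with x hx
    simp [llr, hx]
  filter_upwards [hshift, hself] with x hx hx0
  rw [hx, hx0]
  simp

/-- for `Z ~ N(m, σ²)` with `σ > 0`, the s-value of the mean equals
`exp(−m²/(2σ²))`. -/
theorem svalue_mean_gaussian (m σ : ℝ) (hσ : 0 < σ) :
    (⨆ P : {P : Measure ℝ //
        IsProbabilityMeasure P ∧ Integrable (fun z => z) P ∧ ∫ z, z ∂P = 0},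
      expNegKL P.1 (gaussianReal m ⟨σ ^ 2, sq_nonneg σ⟩)) =
      Real.exp (-(m ^ 2) / (2 * σ ^ 2)) := by
  have hv := aux_vne σ hσ
  set Q : Measure ℝ := gaussianReal m ⟨σ ^ 2, sq_nonneg σ⟩ with hQdef
  set Q₀ : Measure ℝ := gaussianReal 0 ⟨σ ^ 2, sq_nonneg σ⟩ with hQ₀def
  have hQ₀Q : Q₀ ≪ Q := (gaussianReal_absolutelyContinuous _ hv).trans
    (gaussianReal_absolutelyContinuous' _ hv)
  have hz₀ : Integrable (fun z : ℝ => z) Q₀ := aux_integrable_id σ hσ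
  have hmean₀ : ∫ z, z ∂Q₀ = 0 := aux_mean_zero σ hσ
  have hc₀ : Integrable (fun x : ℝ => (m ^ 2 - 2 * m * x) / (2 * σ ^ 2)) Q₀ :=
    aux_integrable_c m σ Q₀ hz₀
  have hint₀ : Integrable (llr Q₀ Q) Q₀ := hc₀.congr (aux_llr_Q₀ m σ hσ).symm
  have hval₀ : ∫ x, llr Q₀ Q x ∂Q₀ = m ^ 2 / (2 * σ ^ 2) := by
    rw [integral_congr_ae (aux_llr_Q₀ m σ hσ), aux_integral_c m σ Q₀ hz₀ hmean₀]
  have hnn : (0:ℝ) ≤ m ^ 2 / (2 * σ ^ 2) := by positivity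
  have hKL₀ : KLdiv Q₀ Q = ENNReal.ofReal (m ^ 2 / (2 * σ ^ 2)) := by
    rw [KLdiv, if_pos ⟨hQ₀Q, hint₀⟩, hval₀]
  have hexp₀ : expNegKL Q₀ Q = Real.exp (-(m ^ 2) / (2 * σ ^ 2)) := by
    rw [expNegKL, if_neg (by rw [hKL₀]; exact ENNReal.ofReal_ne_top), hKL₀,
      ENNReal.toReal_ofReal hnn, neg_div]
  have hub : ∀ P : {P : Measure ℝ //
      IsProbabilityMeasure P ∧ Integrable (fun z => z) P ∧ ∫ z, z ∂P = 0},
      expNegKL P.1 Q ≤ Real.exp (-(m ^ 2) / (2 * σ ^ 2)) := by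
    rintro ⟨P, hPprob, hPz, hPmean⟩
    haveI := hPprob
    by_cases hT : KLdiv P Q = ⊤
    · rw [expNegKL, if_pos hT]; exact (Real.exp_pos _).le
    · have hcond : P ≪ Q ∧ Integrable (llr P Q) P := by
        by_contra h
        exact hT (by rw [KLdiv, if_neg h])
      have hge := aux_lower_bound m σ hσ P hcond.1 hcond.2 hPz hPmean
      rw [expNegKL, if_neg hT, KLdiv, if_pos hcond, ENNReal.toReal_ofReal (hnn.trans hge),
        neg_div]
      exact Real.exp_le_exp.mpr (by linarith)
  haveI hne : Nonempty {P : Measure ℝ //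
      IsProbabilityMeasure P ∧ Integrable (fun z => z) P ∧ ∫ z, z ∂P = 0} :=
    ⟨⟨Q₀, inferInstance, hz₀, hmean₀⟩⟩
  refine le_antisymm (ciSup_le hub) ?_
  rw [← hexp₀]
  refine le_ciSup (f := fun P : {P : Measure ℝ //
      IsProbabilityMeasure P ∧ Integrable (fun z => z) P ∧ ∫ z, z ∂P = 0} =>
      expNegKL P.1 Q) ⟨Real.exp (-(m ^ 2) / (2 * σ ^ 2)), ?_⟩
    (⟨Q₀, inferInstance, hz₀, hmean₀⟩ : {P : Measure ℝ //
      IsProbabilityMeasure P ∧ Integrable (fun z => z) P ∧ ∫ z, z ∂P = 0})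
  rintro y ⟨i, rfl⟩
  exact hub i
end

section
/- Let Z ~ P0 be a real-valued random variable with finite moment generating function, mean 0, and variance σ² > 0. For μ ∈ ℝ, consider the parameter θ_μ(P) = E_P[Z] + μ and its s-value s(θ_μ, P0) = sup{ exp(−D_KL(P‖P0)) : E_P[Z] + μ = 0 }. Then, as μ → 0, s(θ_μ, P0) = e^{−μ²/(2σ²)} + o(μ²); that is, the function μ ↦ s(θ_μ,P0) − e^{−μ²/(2σ²)} is o(μ²) as μ → 0. -/
open MeasureTheory ProbabilityTheory Real
open scoped ENNReal NNReal Classical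

open Filter Asymptotics
open scoped Topology

set_option linter.unusedSectionVars false
set_option linter.unusedVariables false


section Aux
variable {P₀ : Measure ℝ} [IsProbabilityMeasure P₀]

lemma exp_comb (a z : ℝ) : Real.exp ((a + 1) * z) = Real.exp z * Real.exp (a * z) := by
  rw [show (a+1)*z = z + a*z by ring, Real.exp_add]

lemma exp_comb' (a z : ℝ) : Real.exp ((a - 1) * z) = Real.exp (-z) * Real.exp (a * z) := by
  rw [show (a-1)*z = -z + a*z by ring, Real.exp_add]

/-- `|z|^k * exp (l z)` is integrable when all exponential moments are finite. -/
lemma integrable_abs_pow_mul_exp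
    (hmgf : ∀ l : ℝ, Integrable (fun z => Real.exp (l * z)) P₀) (k : ℕ) (l : ℝ) :
    Integrable (fun z => |z| ^ k * Real.exp (l * z)) P₀ := by
  have hb : ∀ z : ℝ, |z| ^ k * Real.exp (l * z)
      ≤ (k.factorial : ℝ) * (Real.exp ((l + 1) * z) + Real.exp ((l - 1) * z)) := by
    intro z
    have hk : (0:ℝ) < k.factorial := by positivity
    have h1 : |z| ^ k ≤ (k.factorial : ℝ) * Real.exp |z| := by
      have h := Real.pow_div_factorial_le_exp |z| (abs_nonneg z) k
      calc |z| ^ k = |z| ^ k / k.factorial * k.factorial := by field_simp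
        _ ≤ Real.exp |z| * k.factorial := mul_le_mul_of_nonneg_right h hk.le
        _ = (k.factorial : ℝ) * Real.exp |z| := by ring
    have h2 : Real.exp |z| ≤ Real.exp z + Real.exp (-z) := by
      rcases abs_cases z with ⟨h, _⟩ | ⟨h, _⟩
      · rw [h]; nlinarith [Real.exp_pos (-z)]
      · rw [h]; nlinarith [Real.exp_pos z]
    have h3 : |z| ^ k ≤ (k.factorial : ℝ) * (Real.exp z + Real.exp (-z)) := by
      refine h1.trans ?_
      exact mul_le_mul_of_nonneg_left h2 hk.le
    calc |z| ^ k * Real.exp (l * z)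
        ≤ (k.factorial : ℝ) * (Real.exp z + Real.exp (-z)) * Real.exp (l * z) :=
          mul_le_mul_of_nonneg_right h3 (Real.exp_pos _).le
      _ = (k.factorial : ℝ) * (Real.exp ((l + 1) * z) + Real.exp ((l - 1) * z)) := by
          rw [exp_comb l z, exp_comb' l z]; ring
  refine Integrable.mono (((hmgf (l+1)).add (hmgf (l-1))).const_mul (k.factorial : ℝ)) ?_ ?_
  · exact (((measurable_id.abs.pow_const k).mul
      ((measurable_id.const_mul l).exp)).aestronglyMeasurable)
  · refine Eventually.of_forall fun z => ?_
    have h0 : 0 ≤ |z| ^ k * Real.exp (l * z) := by positivity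
    rw [Real.norm_eq_abs, abs_of_nonneg h0, Real.norm_eq_abs]
    refine (hb z).trans (le_abs_self _)

lemma integrable_pow_mul_exp
    (hmgf : ∀ l : ℝ, Integrable (fun z => Real.exp (l * z)) P₀) (k : ℕ) (l : ℝ) :
    Integrable (fun z => z ^ k * Real.exp (l * z)) P₀ := by
  refine (integrable_abs_pow_mul_exp hmgf k l).mono ?_ ?_
  · exact (((measurable_id.pow_const k).mul ((measurable_id.const_mul l).exp)).aestronglyMeasurable)
  · refine Eventually.of_forall fun z => ?_
    rw [Real.norm_eq_abs, Real.norm_eq_abs, abs_mul, abs_pow, Real.abs_exp]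
    exact le_abs_self _

/-- the moment integrals -/
noncomputable def Mk (P₀ : Measure ℝ) (k : ℕ) (l : ℝ) : ℝ := ∫ z, z ^ k * Real.exp (l * z) ∂P₀

lemma hasDerivAt_Mk (hmgf : ∀ l : ℝ, Integrable (fun z => Real.exp (l * z)) P₀)
    (k : ℕ) (l : ℝ) : HasDerivAt (Mk P₀ k) (Mk P₀ (k+1) l) l := by
  have hbound : Integrable
      (fun z => |z| ^ (k+1) * (Real.exp ((l+1) * z) + Real.exp ((l-1) * z))) P₀ := by
    have h1 := integrable_abs_pow_mul_exp hmgf (k+1) (l+1)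
    have h2 := integrable_abs_pow_mul_exp hmgf (k+1) (l-1)
    refine (h1.add h2).congr (Eventually.of_forall fun z => ?_)
    simp only [Pi.add_apply]; ring
  have key := hasDerivAt_integral_of_dominated_loc_of_deriv_le
      (F := fun x z => z ^ k * Real.exp (x * z))
      (F' := fun x z => z ^ (k+1) * Real.exp (x * z)) (μ := P₀) (x₀ := l)
      (bound := fun z => |z| ^ (k+1) * (Real.exp ((l+1) * z) + Real.exp ((l-1) * z)))
      (Metric.ball_mem_nhds l one_pos) ?_ ?_ ?_ ?_ hbound ?_
  · exact key.2
  · exact Eventually.of_forall fun x =>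
      (((measurable_id.pow_const k).mul ((measurable_id.const_mul x).exp)).aestronglyMeasurable)
  · exact integrable_pow_mul_exp hmgf k l
  · exact (((measurable_id.pow_const (k+1)).mul ((measurable_id.const_mul l).exp)).aestronglyMeasurable)
  · refine Eventually.of_forall fun z => fun x hx => ?_
    have hxz : Real.exp (x * z) ≤ Real.exp ((l+1) * z) + Real.exp ((l-1) * z) := by
      rcases le_or_gt 0 z with hz | hz
      · have hle : x * z ≤ (l+1) * z := by
          have h := abs_lt.1 (mem_ball_iff_norm.1 hx); nlinarith [h.2]
        nlinarith [Real.exp_le_exp.2 hle, Real.exp_pos ((l-1)*z)]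
      · have hle : x * z ≤ (l-1) * z := by
          have h := abs_lt.1 (mem_ball_iff_norm.1 hx); nlinarith [h.1]
        nlinarith [Real.exp_le_exp.2 hle, Real.exp_pos ((l+1)*z)]
    calc ‖z ^ (k+1) * Real.exp (x * z)‖ = |z| ^ (k+1) * Real.exp (x * z) := by
          simp [abs_mul, abs_pow, abs_exp, Real.norm_eq_abs]
      _ ≤ |z| ^ (k+1) * (Real.exp ((l+1) * z) + Real.exp ((l-1) * z)) :=
          mul_le_mul_of_nonneg_left hxz (by positivity)
  · refine Eventually.of_forall fun z => fun x _ => ?_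
    have h := (((hasDerivAt_id x).mul_const z).exp).const_mul (z ^ k)
    simpa [pow_succ, id_eq, one_mul, mul_comm, mul_assoc, mul_left_comm] using h

end Aux

section Cgf
variable {P₀ : Measure ℝ} [IsProbabilityMeasure P₀]

lemma Mk_zero_eq (l : ℝ) : Mk P₀ 0 l = ∫ z, Real.exp (l * z) ∂P₀ := by simp [Mk]

lemma Mk_zero_pos (hmgf : ∀ l : ℝ, Integrable (fun z => Real.exp (l * z)) P₀) (l : ℝ) :
    0 < Mk P₀ 0 l := by
  rw [Mk_zero_eq]
  exact integral_exp_pos (hmgf l)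

noncomputable def cgfF (P₀ : Measure ℝ) (l : ℝ) : ℝ := Real.log (Mk P₀ 0 l)
noncomputable def cgfD (P₀ : Measure ℝ) (l : ℝ) : ℝ := Mk P₀ 1 l / Mk P₀ 0 l
noncomputable def cgfDD (P₀ : Measure ℝ) (l : ℝ) : ℝ :=
  (Mk P₀ 2 l * Mk P₀ 0 l - Mk P₀ 1 l * Mk P₀ 1 l) / (Mk P₀ 0 l) ^ 2

lemma hasDerivAt_cgfF (hmgf : ∀ l : ℝ, Integrable (fun z => Real.exp (l * z)) P₀) (l : ℝ) :
    HasDerivAt (cgfF P₀) (cgfD P₀ l) l :=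
  (hasDerivAt_Mk hmgf 0 l).log (Mk_zero_pos hmgf l).ne'

lemma hasDerivAt_cgfD (hmgf : ∀ l : ℝ, Integrable (fun z => Real.exp (l * z)) P₀) (l : ℝ) :
    HasDerivAt (cgfD P₀) (cgfDD P₀ l) l :=
  (hasDerivAt_Mk hmgf 1 l).div (hasDerivAt_Mk hmgf 0 l) (Mk_zero_pos hmgf l).ne'

lemma continuous_Mk (hmgf : ∀ l : ℝ, Integrable (fun z => Real.exp (l * z)) P₀) (k : ℕ) :
    Continuous (Mk P₀ k) := by
  have : Differentiable ℝ (Mk P₀ k) := fun l => (hasDerivAt_Mk hmgf k l).differentiableAt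
  exact this.continuous

lemma continuous_cgfDD (hmgf : ∀ l : ℝ, Integrable (fun z => Real.exp (l * z)) P₀) :
    Continuous (cgfDD P₀) := by
  refine Continuous.div ?_ ?_ ?_
  · exact ((continuous_Mk hmgf 2).mul (continuous_Mk hmgf 0)).sub
      ((continuous_Mk hmgf 1).mul (continuous_Mk hmgf 1))
  · exact (continuous_Mk hmgf 0).pow 2
  · intro l; exact pow_ne_zero 2 (Mk_zero_pos hmgf l).ne'

lemma hasStrictDerivAt_cgfD (hmgf : ∀ l : ℝ, Integrable (fun z => Real.exp (l * z)) P₀) :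
    HasStrictDerivAt (cgfD P₀) (cgfDD P₀ 0) 0 := by
  have hcd : ContDiff ℝ 1 (cgfD P₀) := by
    rw [contDiff_one_iff_deriv]
    constructor
    · exact fun l => (hasDerivAt_cgfD hmgf l).differentiableAt
    · have : deriv (cgfD P₀) = cgfDD P₀ := funext fun l => (hasDerivAt_cgfD hmgf l).deriv
      rw [this]; exact continuous_cgfDD hmgf
  have h := (hcd.contDiffAt (x := 0)).hasStrictDerivAt one_ne_zero
  rwa [(hasDerivAt_cgfD hmgf 0).deriv] at h

lemma Mk_zero_zero : Mk P₀ 0 0 = 1 := by simp [Mk]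

lemma Mk_one_zero (hmean : ∫ z, z ∂P₀ = 0) : Mk P₀ 1 0 = 0 := by
  simp only [Mk, zero_mul, Real.exp_zero, mul_one, pow_one]
  exact hmean

lemma Mk_two_zero {σ : ℝ} (hvar : ∫ z, z ^ 2 ∂P₀ = σ ^ 2) : Mk P₀ 2 0 = σ ^ 2 := by
  simp only [Mk, zero_mul, Real.exp_zero, mul_one]
  exact hvar

lemma cgfF_zero : cgfF P₀ 0 = 0 := by simp [cgfF, Mk_zero_zero]

lemma cgfD_zero (hmean : ∫ z, z ∂P₀ = 0) : cgfD P₀ 0 = 0 := by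
  simp [cgfD, Mk_one_zero hmean]

lemma cgfDD_zero {σ : ℝ} (hmean : ∫ z, z ∂P₀ = 0) (hvar : ∫ z, z ^ 2 ∂P₀ = σ ^ 2) :
    cgfDD P₀ 0 = σ ^ 2 := by
  simp [cgfDD, Mk_zero_zero, Mk_one_zero hmean, Mk_two_zero hvar]

end Cgf

section KL
variable {α : Type*} [MeasurableSpace α] {μ ν : Measure α}

lemma integral_llr_nonneg' [IsProbabilityMeasure μ] [IsProbabilityMeasure ν]
    (hμν : μ ≪ ν) (hint : Integrable (llr μ ν) μ) : 0 ≤ ∫ x, llr μ ν x ∂μ := by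
  have hneg : Integrable (llr ν μ) μ := hint.neg.congr (neg_llr hμν)
  have hrn : Integrable (fun x => (ν.rnDeriv μ x).toReal) μ := Measure.integrable_toReal_rnDeriv
  have hle : ∀ᵐ x ∂μ, llr ν μ x ≤ (ν.rnDeriv μ x).toReal - 1 := by
    filter_upwards [Measure.rnDeriv_pos' hμν, Measure.rnDeriv_lt_top ν μ] with x hpos hlt
    have h : 0 < (ν.rnDeriv μ x).toReal := ENNReal.toReal_pos hpos.ne' hlt.ne
    exact Real.log_le_sub_one_of_pos h
  have h1 : ∫ x, llr ν μ x ∂μ ≤ ∫ x, ((ν.rnDeriv μ x).toReal - 1) ∂μ :=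
    integral_mono_ae hneg (hrn.sub (integrable_const 1)) hle
  have h2 : ∫ x, ((ν.rnDeriv μ x).toReal - 1) ∂μ = (∫ x, (ν.rnDeriv μ x).toReal ∂μ) - 1 := by
    rw [integral_sub hrn (integrable_const 1)]; simp
  have h3 : ∫ x, (ν.rnDeriv μ x).toReal ∂μ ≤ 1 := by
    have := Measure.setIntegral_toReal_rnDeriv_le (μ := ν) (ν := μ) (s := Set.univ)
      (measure_ne_top ν _)
    simpa using this
  have h4 : ∫ x, llr ν μ x ∂μ = - ∫ x, llr μ ν x ∂μ := by
    rw [← integral_neg]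
    exact (integral_congr_ae (neg_llr hμν)).symm
  linarith

lemma gibbs_ineq [IsProbabilityMeasure μ] [IsProbabilityMeasure ν] (hμν : μ ≪ ν)
    (hint : Integrable (llr μ ν) μ) {f : α → ℝ} (hfμ : Integrable f μ)
    (hfν : Integrable (fun x => Real.exp (f x)) ν) :
    ∫ x, f x ∂μ - Real.log (∫ x, Real.exp (f x) ∂ν) ≤ ∫ x, llr μ ν x ∂μ := by
  haveI : IsProbabilityMeasure (ν.tilted f) := isProbabilityMeasure_tilted hfν
  have hacQ : μ ≪ ν.tilted f := hμν.trans (absolutelyContinuous_tilted hfν)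
  have hintQ : Integrable (llr μ (ν.tilted f)) μ := integrable_llr_tilted_right hμν hfμ hint hfν
  have h0 : 0 ≤ ∫ x, llr μ (ν.tilted f) x ∂μ := integral_llr_nonneg' hacQ hintQ
  rw [integral_llr_tilted_right hμν hfμ hfν hint] at h0
  linarith

end KL

section Tilt
variable {P₀ : Measure ℝ} [IsProbabilityMeasure P₀]

lemma tilted_isProb (hmgf : ∀ l : ℝ, Integrable (fun z => Real.exp (l * z)) P₀) (l : ℝ) :
    IsProbabilityMeasure (P₀.tilted (fun z => l * z)) :=
  isProbabilityMeasure_tilted (hmgf l)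

lemma integrable_id_tilted (hmgf : ∀ l : ℝ, Integrable (fun z => Real.exp (l * z)) P₀) (l : ℝ) :
    Integrable (fun z => z) (P₀.tilted (fun z => l * z)) := by
  rw [Measure.tilted]
  have hm : Measurable fun z : ℝ => ENNReal.ofReal (Real.exp (l * z) / ∫ x, Real.exp (l * x) ∂P₀) :=
    (((measurable_id.const_mul l).exp).div_const _).ennreal_ofReal
  rw [integrable_withDensity_iff hm (Eventually.of_forall fun z => ENNReal.ofReal_lt_top)]
  have hMpos : 0 < ∫ x, Real.exp (l * x) ∂P₀ := integral_exp_pos (hmgf l)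
  have : Integrable (fun z => (z ^ 1 * Real.exp (l * z)) / (∫ x, Real.exp (l * x) ∂P₀)) P₀ :=
    (integrable_pow_mul_exp hmgf 1 l).div_const _
  refine this.congr (Eventually.of_forall fun z => ?_)
  have hz : (ENNReal.ofReal (Real.exp (l * z) / ∫ x, Real.exp (l * x) ∂P₀)).toReal
      = Real.exp (l * z) / ∫ x, Real.exp (l * x) ∂P₀ := ENNReal.toReal_ofReal (by positivity)
  simp only [pow_one, hz]
  ring

lemma integral_id_tilted (hmgf : ∀ l : ℝ, Integrable (fun z => Real.exp (l * z)) P₀) (l : ℝ) :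
    ∫ z, z ∂(P₀.tilted (fun z => l * z)) = cgfD P₀ l := by
  rw [integral_tilted]
  simp only [smul_eq_mul]
  have h1 : ∀ z : ℝ, Real.exp (l * z) / (∫ x, Real.exp (l * x) ∂P₀) * z
      = (z ^ 1 * Real.exp (l * z)) / (∫ x, Real.exp (l * x) ∂P₀) := by
    intro z; rw [pow_one]; ring
  rw [integral_congr_ae (Eventually.of_forall h1), integral_div]
  rw [cgfD, Mk, Mk_zero_eq]

lemma llr_tilted_ae (hmgf : ∀ l : ℝ, Integrable (fun z => Real.exp (l * z)) P₀) (l : ℝ) :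
    llr (P₀.tilted (fun z => l * z)) P₀
      =ᵐ[P₀.tilted (fun z => l * z)] fun z => l * z - cgfF P₀ l := by
  have h0 : llr (P₀.tilted (fun z => l * z)) P₀
      =ᵐ[P₀] fun z => l * z - cgfF P₀ l := by
    have h := llr_tilted_left (μ := P₀) (ν := P₀) Measure.AbsolutelyContinuous.rfl (hmgf l)
      ((measurable_id.const_mul l).aemeasurable)
    have hself : llr P₀ P₀ =ᵐ[P₀] 0 := by
      filter_upwards [Measure.rnDeriv_self P₀] with x hx
      simp [llr, hx]
    filter_upwards [h, hself] with x hx hx0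
    rw [hx, hx0, cgfF, Mk_zero_eq]
    simp
  exact (tilted_absolutelyContinuous P₀ _).ae_le h0

lemma integrable_llr_tilted_self (hmgf : ∀ l : ℝ, Integrable (fun z => Real.exp (l * z)) P₀)
    (l : ℝ) : Integrable (llr (P₀.tilted (fun z => l * z)) P₀) (P₀.tilted (fun z => l * z)) := by
  haveI := tilted_isProb hmgf l
  refine Integrable.congr ?_ (llr_tilted_ae hmgf l).symm
  exact ((integrable_id_tilted hmgf l).const_mul l).sub (integrable_const _)

lemma integral_llr_tilted_self (hmgf : ∀ l : ℝ, Integrable (fun z => Real.exp (l * z)) P₀)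
    (l : ℝ) : ∫ z, llr (P₀.tilted (fun z => l * z)) P₀ z ∂(P₀.tilted (fun z => l * z))
      = l * cgfD P₀ l - cgfF P₀ l := by
  haveI := tilted_isProb hmgf l
  rw [integral_congr_ae (llr_tilted_ae hmgf l)]
  rw [integral_sub (((integrable_id_tilted hmgf l).const_mul l)) (integrable_const _)]
  rw [integral_const_mul, integral_id_tilted hmgf l]
  simp

end Tilt

section SupEval
variable {P₀ : Measure ℝ} [IsProbabilityMeasure P₀]

lemma expNegKL_of {α : Type*} [MeasurableSpace α] {P Q : Measure α}
    (h : P ≪ Q ∧ Integrable (llr P Q) P) (hnn : 0 ≤ ∫ x, llr P Q x ∂P) :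
    expNegKL P Q = Real.exp (- ∫ x, llr P Q x ∂P) := by
  have hK : KLdiv P Q = ENNReal.ofReal (∫ x, llr P Q x ∂P) := by unfold KLdiv; exact if_pos h
  rw [expNegKL, hK, if_neg ENNReal.ofReal_ne_top, ENNReal.toReal_ofReal hnn]

lemma expNegKL_of_not {α : Type*} [MeasurableSpace α] {P Q : Measure α}
    (h : ¬ (P ≪ Q ∧ Integrable (llr P Q) P)) : expNegKL P Q = 0 := by
  have hK : KLdiv P Q = ⊤ := by unfold KLdiv; exact if_neg h
  rw [expNegKL, hK, if_pos rfl]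

lemma sup_eval (hmgf : ∀ l : ℝ, Integrable (fun z => Real.exp (l * z)) P₀)
    {l m : ℝ} (hl : cgfD P₀ l = -m) :
    (⨆ P : {P : Measure ℝ //
        IsProbabilityMeasure P ∧ Integrable (fun z => z) P ∧ (∫ z, z ∂P) + m = 0},
      expNegKL P.1 P₀) = Real.exp (-(l * cgfD P₀ l - cgfF P₀ l)) := by
  set S : ℝ := l * cgfD P₀ l - cgfF P₀ l with hSdef
  haveI hprob := tilted_isProb hmgf l
  have hKstar : ∫ z, llr (P₀.tilted (fun z => l * z)) P₀ z ∂(P₀.tilted (fun z => l * z)) = S :=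
    integral_llr_tilted_self hmgf l
  have hS0 : 0 ≤ S := by
    rw [← hKstar]
    exact integral_llr_nonneg' (tilted_absolutelyContinuous P₀ _) (integrable_llr_tilted_self hmgf l)
  have hmem : IsProbabilityMeasure (P₀.tilted (fun z => l * z))
      ∧ Integrable (fun z => z) (P₀.tilted (fun z => l * z))
      ∧ (∫ z, z ∂(P₀.tilted (fun z => l * z))) + m = 0 := by
    refine ⟨hprob, integrable_id_tilted hmgf l, ?_⟩
    rw [integral_id_tilted hmgf l, hl]; ring
  haveI : Nonempty {P : Measure ℝ //
      IsProbabilityMeasure P ∧ Integrable (fun z => z) P ∧ (∫ z, z ∂P) + m = 0} :=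
    ⟨⟨_, hmem⟩⟩
  have hub : ∀ P : {P : Measure ℝ //
      IsProbabilityMeasure P ∧ Integrable (fun z => z) P ∧ (∫ z, z ∂P) + m = 0},
      expNegKL P.1 P₀ ≤ Real.exp (-S) := by
    rintro ⟨P, hP1, hP2, hP3⟩
    haveI := hP1
    by_cases hc : P ≪ P₀ ∧ Integrable (llr P P₀) P
    · have hnn := integral_llr_nonneg' hc.1 hc.2
      have hgb := gibbs_ineq hc.1 hc.2 (f := fun z => l * z) (hP2.const_mul l) (hmgf l)
      have hmeanP : ∫ z, z ∂P = -m := by linarith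
      have h1 : ∫ x, l * x ∂P = l * (-m) := by
        rw [integral_const_mul, hmeanP]
      have h2 : Real.log (∫ x, Real.exp (l * x) ∂P₀) = cgfF P₀ l := by
        rw [cgfF, Mk_zero_eq]
      rw [h1, h2] at hgb
      have hSle : S ≤ ∫ x, llr P P₀ x ∂P := by
        rw [hSdef, hl]; linarith
      rw [expNegKL_of hc hnn]
      exact Real.exp_le_exp.2 (by linarith)
    · rw [expNegKL_of_not hc]
      exact (Real.exp_pos _).le
  have hstar : expNegKL (P₀.tilted (fun z => l * z)) P₀ = Real.exp (-S) := by
    rw [expNegKL_of ⟨tilted_absolutelyContinuous P₀ _, integrable_llr_tilted_self hmgf l⟩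
      (hKstar ▸ hS0), hKstar]
  refine le_antisymm (ciSup_le hub) ?_
  have hbdd : BddAbove (Set.range fun P : {P : Measure ℝ //
      IsProbabilityMeasure P ∧ Integrable (fun z => z) P ∧ (∫ z, z ∂P) + m = 0} =>
      expNegKL P.1 P₀) := by
    refine ⟨Real.exp (-S), ?_⟩
    rintro y ⟨P, rfl⟩
    exact hub P
  calc Real.exp (-S) = expNegKL (P₀.tilted (fun z => l * z)) P₀ := hstar.symm
    _ ≤ _ := le_ciSup hbdd ⟨_, hmem⟩

end SupEval

lemma isLittleO_sq_of_deriv {F F' : ℝ → ℝ} (hd : ∀ t, HasDerivAt F (F' t) t)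
    (h0 : F 0 = 0) (h : F' =o[𝓝 (0:ℝ)] fun t => t) :
    F =o[𝓝 (0:ℝ)] fun t => t ^ 2 := by
  rw [isLittleO_iff] at h ⊢
  intro c hc
  rcases Metric.eventually_nhds_iff.1 (h hc) with ⟨δ, hδ, hδ'⟩
  refine Metric.eventually_nhds_iff.2 ⟨δ, hδ, fun {y} hy => ?_⟩
  rw [Real.dist_eq, sub_zero] at hy
  have key : ‖F y - F 0‖ ≤ (c * |y|) * ‖y - 0‖ := by
    refine (convex_uIcc (0:ℝ) y).norm_image_sub_le_of_norm_hasDerivWithin_le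
      (f' := F') (fun x _ => (hd x).hasDerivWithinAt) (fun x hx => ?_)
      Set.left_mem_uIcc Set.right_mem_uIcc
    have hxy : |x| ≤ |y| := by
      rcases Set.mem_uIcc.1 hx with ⟨h1, h2⟩ | ⟨h1, h2⟩
      · rw [abs_le]; constructor <;> [nlinarith [abs_nonneg y, le_abs_self y];
          nlinarith [le_abs_self y]]
      · rw [abs_le]; constructor <;> [nlinarith [neg_abs_le y]; nlinarith [neg_abs_le y]]
    have hxd : dist x 0 < δ := by rw [Real.dist_eq, sub_zero]; exact lt_of_le_of_lt hxy hy
    have := hδ' hxd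
    simp only [Real.norm_eq_abs] at this ⊢
    exact this.trans (by nlinarith [hc.le])
  rw [h0, sub_zero, sub_zero] at key
  calc ‖F y‖ ≤ c * |y| * ‖y‖ := key
    _ = c * ‖y ^ 2‖ := by simp only [Real.norm_eq_abs, abs_pow]; ring

lemma isBigO_mul_const' (c : ℝ) : (fun m : ℝ => m * c) =O[𝓝 (0:ℝ)] fun m => m :=
  isBigO_iff.2 ⟨|c|, Eventually.of_forall fun m => by
    rw [Real.norm_eq_abs, Real.norm_eq_abs, abs_mul]; exact le_of_eq (mul_comm _ _)⟩




/-- small shifts: for `Z ~ P₀` with finite MGF, mean `0` and variance `σ² > 0`,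
the s-value of the parameter `θ_μ(P) = E_P[Z] + μ` satisfies
`s(θ_μ, P₀) = exp(−μ²/(2σ²)) + o(μ²)` as `μ → 0`. -/
theorem svalue_small_shift (P₀ : Measure ℝ) [IsProbabilityMeasure P₀]
    (hmgf : ∀ l : ℝ, Integrable (fun z => Real.exp (l * z)) P₀)
    (hint : Integrable (fun z => z) P₀) (hmean : ∫ z, z ∂P₀ = 0)
    (σ : ℝ) (hσ : 0 < σ) (hvar : ∫ z, z ^ 2 ∂P₀ = σ ^ 2) :
    (fun m : ℝ =>
        (⨆ P : {P : Measure ℝ //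
            IsProbabilityMeasure P ∧ Integrable (fun z => z) P ∧ (∫ z, z ∂P) + m = 0},
          expNegKL P.1 P₀) - Real.exp (-(m ^ 2) / (2 * σ ^ 2)))
      =o[nhds (0 : ℝ)] (fun m : ℝ => m ^ 2) := by
  have hσ2 : (0:ℝ) < σ ^ 2 := by positivity
  have hne : (σ:ℝ) ^ 2 ≠ 0 := hσ2.ne'
  have hstrict : HasStrictDerivAt (cgfD P₀) (σ ^ 2) 0 := by
    have h := hasStrictDerivAt_cgfD hmgf
    rwa [cgfDD_zero hmean hvar] at h
  set g : ℝ → ℝ := hstrict.localInverse (cgfD P₀) (σ ^ 2) 0 hne with hgdef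
  have hD0 : cgfD P₀ 0 = 0 := cgfD_zero hmean
  have hg0 : g 0 = 0 := by
    have h := (hstrict.hasStrictFDerivAt_equiv hne).localInverse_apply_image
    rw [hD0] at h
    exact h
  have hgd : HasStrictDerivAt g (σ ^ 2)⁻¹ 0 := by
    have h := hstrict.to_localInverse
    rw [hD0] at h
    exact h hne
  have hright : ∀ᶠ y in 𝓝 (0:ℝ), cgfD P₀ (g y) = y := by
    have h := (hstrict.hasStrictFDerivAt_equiv hne).eventually_right_inverse
    rwa [hD0] at h
  have hneg : Tendsto (fun m : ℝ => -m) (𝓝 0) (𝓝 0) := by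
    simpa using (continuous_neg.tendsto (0:ℝ))
  set l : ℝ → ℝ := fun m => g (-m) with hldef
  have hml : ∀ᶠ m in 𝓝 (0:ℝ), cgfD P₀ (l m) = -m := hneg.eventually hright
  have hl0 : Tendsto l (𝓝 0) (𝓝 0) := by
    have h := hgd.hasDerivAt.continuousAt.tendsto
    rw [hg0] at h
    exact h.comp hneg
  have hgO : (fun y => g y - y * (σ ^ 2)⁻¹) =o[𝓝 (0:ℝ)] fun y => y := by
    have h := hasDerivAt_iff_isLittleO.1 hgd.hasDerivAt
    refine h.congr' (Eventually.of_forall fun y => ?_) (Eventually.of_forall fun y => ?_) <;>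
      simp [hg0]
  have he1 : (fun m => l m + m * (σ ^ 2)⁻¹) =o[𝓝 (0:ℝ)] fun m => m := by
    have h := hgO.comp_tendsto hneg
    have h2 : (fun m : ℝ => -m) =O[𝓝 (0:ℝ)] fun m => m :=
      (isBigO_refl (fun m : ℝ => m) _).neg_left
    refine (h.trans_isBigO h2).congr'
      (Eventually.of_forall fun m => ?_) (Eventually.of_forall fun m => rfl)
    simp only [Function.comp, hldef]
    ring
  have hlO : (fun m => l m) =O[𝓝 (0:ℝ)] fun m => m := by
    have h := he1.isBigO.sub (isBigO_mul_const' ((σ ^ 2)⁻¹))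
    exact h.congr_left fun m => by ring
  have hF' : (fun t => cgfD P₀ t - σ ^ 2 * t) =o[𝓝 (0:ℝ)] fun t => t := by
    have hd : HasDerivAt (cgfD P₀) (σ ^ 2) 0 := by
      have h := hasDerivAt_cgfD hmgf 0
      rwa [cgfDD_zero hmean hvar] at h
    have h := hasDerivAt_iff_isLittleO.1 hd
    refine h.congr' (Eventually.of_forall fun t => ?_) (Eventually.of_forall fun t => ?_) <;>
      simp [hD0] <;> ring
  have hTaylor : (fun t => cgfF P₀ t - σ ^ 2 * t ^ 2 / 2) =o[𝓝 (0:ℝ)] fun t => t ^ 2 := by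
    refine isLittleO_sq_of_deriv (F' := fun t => cgfD P₀ t - σ ^ 2 * t) (fun t => ?_)
      (by simp [cgfF_zero]) hF'
    have h1 := hasDerivAt_cgfF hmgf t
    have h2 : HasDerivAt (fun t : ℝ => σ ^ 2 * t ^ 2 / 2) (σ ^ 2 * t) t := by
      have h3 := ((hasDerivAt_pow 2 t).const_mul (σ ^ 2)).div_const 2
      refine h3.congr_deriv ?_
      rw [show (2:ℕ) - 1 = 1 from rfl, pow_one]
      ring
    exact h1.sub h2
  have hE2 : (fun m => cgfF P₀ (l m) - σ ^ 2 * (l m) ^ 2 / 2) =o[𝓝 (0:ℝ)] fun m => m ^ 2 := by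
    have h := (hTaylor.comp_tendsto hl0).trans_isBigO (hlO.pow 2)
    exact h.congr_left fun m => rfl
  have he3 : (fun m => (l m) ^ 2 - (m * (σ ^ 2)⁻¹) ^ 2) =o[𝓝 (0:ℝ)] fun m => m ^ 2 := by
    have hsub : (fun m => l m - m * (σ ^ 2)⁻¹) =O[𝓝 (0:ℝ)] fun m => m :=
      hlO.sub (isBigO_mul_const' _)
    have h := he1.mul_isBigO hsub
    exact h.congr' (Eventually.of_forall fun m => by ring)
      (Eventually.of_forall fun m => by ring)
  have he1m : (fun m => (l m + m * (σ ^ 2)⁻¹) * m) =o[𝓝 (0:ℝ)] fun m => m ^ 2 := by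
    have h := he1.mul_isBigO (isBigO_refl (fun m : ℝ => m) (𝓝 0))
    exact h.congr' (Eventually.of_forall fun m => rfl) (Eventually.of_forall fun m => by ring)
  have hD : (fun m => (l m * (-m) - cgfF P₀ (l m)) - m ^ 2 / (2 * σ ^ 2))
      =o[𝓝 (0:ℝ)] fun m => m ^ 2 := by
    have h := (he1m.neg_left.sub (he3.const_mul_left (σ ^ 2 / 2))).sub hE2
    refine h.congr' (Eventually.of_forall fun m => ?_) (Eventually.of_forall fun m => rfl)
    field_simp
    ring
  have hsup : ∀ᶠ m in 𝓝 (0:ℝ),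
      (⨆ P : {P : Measure ℝ //
          IsProbabilityMeasure P ∧ Integrable (fun z => z) P ∧ (∫ z, z ∂P) + m = 0},
        expNegKL P.1 P₀) = Real.exp (-(l m * (-m) - cgfF P₀ (l m))) := by
    filter_upwards [hml] with m hm
    have h := sup_eval hmgf (l := l m) (m := m) hm
    rwa [hm] at h
  have hexp : ∀ m : ℝ, Real.exp (-(l m * (-m) - cgfF P₀ (l m))) - Real.exp (-(m ^ 2) / (2 * σ ^ 2))
      = Real.exp (-(m ^ 2) / (2 * σ ^ 2)) *
        (Real.exp (-((l m * (-m) - cgfF P₀ (l m)) - m ^ 2 / (2 * σ ^ 2))) - 1) := by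
    intro m
    rw [mul_sub, mul_one, ← Real.exp_add]
    congr 2
    ring
  have hDsmall : ∀ᶠ m in 𝓝 (0:ℝ),
      |(l m * (-m) - cgfF P₀ (l m)) - m ^ 2 / (2 * σ ^ 2)| ≤ 1 := by
    have h1 := (isLittleO_iff.1 hD) one_pos
    have h2 : ∀ᶠ m : ℝ in 𝓝 0, |m| ≤ 1 :=
      Metric.eventually_nhds_iff.2 ⟨1, one_pos, fun {y} hy => by
        rw [Real.dist_eq, sub_zero] at hy; exact hy.le⟩
    filter_upwards [h1, h2] with m hm1 hm2
    rw [Real.norm_eq_abs, Real.norm_eq_abs, one_mul] at hm1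
    refine hm1.trans ?_
    rw [abs_pow]
    nlinarith [abs_nonneg m]
  have hbound : ∀ᶠ m in 𝓝 (0:ℝ),
      ‖(⨆ P : {P : Measure ℝ //
          IsProbabilityMeasure P ∧ Integrable (fun z => z) P ∧ (∫ z, z ∂P) + m = 0},
        expNegKL P.1 P₀) - Real.exp (-(m ^ 2) / (2 * σ ^ 2))‖
      ≤ 2 * ‖(l m * (-m) - cgfF P₀ (l m)) - m ^ 2 / (2 * σ ^ 2)‖ := by
    filter_upwards [hsup, hDsmall] with m h1 h2
    rw [h1, hexp m, Real.norm_eq_abs, Real.norm_eq_abs, abs_mul]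
    have hexple : |Real.exp (-(m ^ 2) / (2 * σ ^ 2))| ≤ 1 := by
      rw [abs_of_pos (Real.exp_pos _), ← Real.exp_zero]
      apply Real.exp_le_exp.2
      have hq : 0 ≤ m ^ 2 / (2 * σ ^ 2) := by positivity
      rw [neg_div]
      linarith
    have habs : |Real.exp (-((l m * (-m) - cgfF P₀ (l m)) - m ^ 2 / (2 * σ ^ 2))) - 1|
        ≤ 2 * |(l m * (-m) - cgfF P₀ (l m)) - m ^ 2 / (2 * σ ^ 2)| := by
      have := Real.abs_exp_sub_one_le (x := -((l m * (-m) - cgfF P₀ (l m)) - m ^ 2 / (2 * σ ^ 2)))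
        (by rwa [abs_neg])
      rwa [abs_neg] at this
    calc |Real.exp (-(m ^ 2) / (2 * σ ^ 2))| *
          |Real.exp (-((l m * (-m) - cgfF P₀ (l m)) - m ^ 2 / (2 * σ ^ 2))) - 1|
        ≤ 1 * (2 * |(l m * (-m) - cgfF P₀ (l m)) - m ^ 2 / (2 * σ ^ 2)|) := by
          apply mul_le_mul hexple habs (abs_nonneg _) (by norm_num)
      _ = 2 * |(l m * (-m) - cgfF P₀ (l m)) - m ^ 2 / (2 * σ ^ 2)| := by ring
  exact (isBigO_iff.2 ⟨2, hbound⟩).trans_isLittleO hD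
end
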